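/- arXiv:2005.11484 — 11 statements merged into one kernel-verified Lean document; each statement's English description precedes it below -/
import Mathlib

section
/- Let S be a right uniform semigroup and suppose xy = y for some x, y ∈ S. Then x is a left identity of S or y is a left zero element of S. -/
universe u

/-- A right action of a semigroup `S` on a set `A`. -/
def IsRightAct (S : Type u) [Semigroup S] {A : Type u} (act : A → S → A) : Prop :=
  ∀ (a : A) (s t : S), act a (s * t) = act (act a s) t

/-- An `S`-homomorphism between right `S`-acts. -/
def IsActHom {S : Type u} [Semigroup S] {A B : Type u} (actA : A → S → A)
    (actB : B → S → B) (f : A → B) : Prop :=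
  ∀ (a : A) (s : S), f (actA a s) = actB (f a) s

/-- A zero element of a right `S`-act. -/
def IsZeroElem {S : Type u} [Semigroup S] {A : Type u} (act : A → S → A) (θ : A) : Prop :=
  ∀ s : S, act θ s = θ

/-- A subact of a right `S`-act. -/
def IsSubact {S : Type u} [Semigroup S] {A : Type u} (act : A → S → A) (B : Set A) : Prop :=
  B.Nonempty ∧ ∀ b ∈ B, ∀ s : S, act b s ∈ B

/-- `B` is large in `A`: every `S`-homomorphism from `A` injective on `B` is injective. -/
def LargeIn {S : Type u} [Semigroup S] {A : Type u} (act : A → S → A) (B : Set A) : Prop :=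
  ∀ (C : Type u) (actC : C → S → C), IsRightAct S actC →
    ∀ f : A → C, IsActHom act actC f → Set.InjOn f B → Function.Injective f

/-- A right `S`-act is uniform if every nonzero subact is large. -/
def UniformAct {S : Type u} [Semigroup S] {A : Type u} (act : A → S → A) : Prop :=
  ∀ B : Set A, IsSubact act B → (∃ b ∈ B, ¬ IsZeroElem act b) → LargeIn act B

/-- A semigroup is right uniform if `S` as a right `S`-act over itself is uniform. -/
def RightUniform (S : Type u) [Semigroup S] : Prop :=
  UniformAct (fun (a : S) (s : S) => a * s)

theorem stmt0 {S : Type u} [Semigroup S] (hu : RightUniform S) (x y : S)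
    (h : x * y = y) : (∀ s : S, x * s = s) ∨ (∀ s : S, y * s = y) := by
  by_cases hz : ∀ s : S, y * s = y
  · exact Or.inr hz
  left
  by_contra hx
  push_neg at hx hz
  obtain ⟨s₀, hs₀⟩ := hx
  obtain ⟨t₀, ht₀⟩ := hz
  set L : S → S := fun a => x * a with hL
  set B : Set S := {s | x * s = s} with hB
  have hsub : IsSubact (fun a s : S => a * s) B := by
    refine ⟨⟨y, h⟩, ?_⟩
    intro b hb s
    show x * (b * s) = b * s
    rw [← mul_assoc, hb]
  have hnz : ∃ b ∈ B, ¬ IsZeroElem (fun a s : S => a * s) b :=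
    ⟨y, h, fun hzz => ht₀ (hzz t₀)⟩
  have hlarge := hu B hsub hnz
  have iter_mul : ∀ (n : ℕ) (a t : S), L^[n] (a * t) = (L^[n] a) * t := by
    intro n
    induction n with
    | zero => intro a t; simp
    | succ k ih =>
      intro a t
      rw [Function.iterate_succ_apply, Function.iterate_succ_apply]
      show L^[k] (x * (a * t)) = L^[k] (x * a) * t
      rw [← mul_assoc, ih]
  have iter_fix : ∀ (n : ℕ) (a : S), x * a = a → L^[n] a = a := by
    intro n a ha
    induction n with
    | zero => rfl
    | succ k ih =>
      rw [Function.iterate_succ_apply]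
      show L^[k] (x * a) = a
      rw [ha, ih]
  have comm : ∀ (n m : ℕ) (a : S), L^[n] (L^[m] a) = L^[m] (L^[n] a) := by
    intro n m a
    rw [← Function.iterate_add_apply, ← Function.iterate_add_apply, Nat.add_comm]
  let r : S → S → Prop := fun a b => ∃ n m : ℕ, L^[n] a = L^[m] b
  have r_refl : ∀ a, r a a := fun a => ⟨0, 0, rfl⟩
  have r_symm : ∀ {a b}, r a b → r b a := fun ⟨n, m, e⟩ => ⟨m, n, e.symm⟩
  have r_trans : ∀ {a b c}, r a b → r b c → r a c := by
    rintro a b c ⟨n, m, e1⟩ ⟨p, q, e2⟩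
    refine ⟨p + n, m + q, ?_⟩
    rw [Function.iterate_add_apply, e1, comm, e2, ← Function.iterate_add_apply]
  let st : Setoid S := ⟨r, r_refl, @r_symm, @r_trans⟩
  let C := Quotient st
  let actC : C → S → C := fun c s =>
    Quotient.liftOn c (fun a => Quotient.mk st (a * s)) (by
      rintro a b ⟨n, m, e⟩
      exact Quotient.sound ⟨n, m, by rw [iter_mul, iter_mul, e]⟩)
  have hact : IsRightAct S actC := by
    intro c s t
    induction c using Quotient.inductionOn with
    | h a => exact congrArg (Quotient.mk st) (mul_assoc a s t).symm
  let f : S → C := fun a => Quotient.mk st a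
  have hhom : IsActHom (fun (a : S) (s : S) => a * s) actC f := fun a s => rfl
  have hinj : Set.InjOn f B := by
    intro a ha b hb hab
    obtain ⟨n, m, e⟩ := Quotient.exact hab
    rwa [iter_fix n a ha, iter_fix m b hb] at e
  have : Function.Injective f := hlarge C actC hact f hhom hinj
  have key : f s₀ = f (x * s₀) := Quotient.sound ⟨1, 0, rfl⟩
  exact hs₀ (this key).symm
end

section
/- Let S be a commutative semigroup whose ideals form a chain under inclusion. Then S is uniform if and only if for all x, y ∈ S, xy = y implies x is an identity element of S or y is a zero element of S. -/
universe u

section Aux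
variable {S : Type u} [CommSemigroup S]

def xpow (x : S) : ℕ → S → S
  | 0, s => s
  | n+1, s => x * xpow x n s

lemma xpow_mul (x : S) (n : ℕ) (s t : S) : xpow x n (s * t) = xpow x n s * t := by
  induction n with
  | zero => rfl
  | succ n ih => simp only [xpow, ih, mul_assoc]

lemma xpow_add (x : S) (n m : ℕ) (s : S) : xpow x (n + m) s = xpow x n (xpow x m s) := by
  induction n with
  | zero => rw [Nat.zero_add]; rfl
  | succ n ih => rw [Nat.succ_add]; simp only [xpow]; rw [ih]

lemma xpow_fix {x z : S} (h : x * z = z) (n : ℕ) : xpow x n z = z := by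
  induction n with
  | zero => rfl
  | succ n ih => simp only [xpow, ih, h]

def relS (x : S) : Setoid S where
  r a b := ∃ n m : ℕ, xpow x n a = xpow x m b
  iseqv := ⟨fun _ => ⟨0, 0, rfl⟩,
    fun ⟨n, m, h⟩ => ⟨m, n, h.symm⟩,
    fun {a b c} ⟨n, m, h1⟩ ⟨k, l, h2⟩ => ⟨k + n, m + l, by
      rw [xpow_add, h1, ← xpow_add, Nat.add_comm k m, xpow_add, h2, ← xpow_add]⟩⟩

def QA (x : S) : Type u := Quotient (relS x)

def qmk (x : S) (s : S) : QA x := Quotient.mk (relS x) s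

def qact (x : S) (c : QA x) (t : S) : QA x :=
  Quotient.lift (fun s => qmk x (s * t))
    (fun a b h => Quotient.sound (by
      obtain ⟨n, m, hnm⟩ := h
      exact ⟨n, m, by rw [xpow_mul, hnm, xpow_mul]⟩)) c

def pid (a : S) : Set S := {z | z = a ∨ ∃ s, z = a * s}

lemma pid_prop (a : S) : (pid a).Nonempty ∧ ∀ c ∈ pid a, ∀ s : S, c * s ∈ pid a := by
  refine ⟨⟨a, Or.inl rfl⟩, ?_⟩
  rintro c (rfl | ⟨u, rfl⟩) s
  · exact Or.inr ⟨s, rfl⟩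
  · exact Or.inr ⟨u * s, mul_assoc _ _ _⟩

end Aux

theorem stmt2 {S : Type u} [CommSemigroup S]
    (hchain : ∀ I J : Set S, (I.Nonempty ∧ ∀ a ∈ I, ∀ s : S, a * s ∈ I) →
      (J.Nonempty ∧ ∀ a ∈ J, ∀ s : S, a * s ∈ J) → I ⊆ J ∨ J ⊆ I) :
    RightUniform S ↔ ∀ x y : S, x * y = y →
      (∀ s : S, x * s = s ∧ s * x = s) ∨ (∀ s : S, y * s = y ∧ s * y = y) := by
  constructor
  · intro hu x y hxy
    by_contra hcon
    push_neg at hcon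
    obtain ⟨⟨t, ht⟩, ⟨w, hw⟩⟩ := hcon
    have hxt : x * t ≠ t := fun h => ht h (by rw [mul_comm]; exact h)
    have hyw : y * w ≠ y := fun h => hw h (by rw [mul_comm]; exact h)
    have hlarge := hu (pid y) (pid_prop y) ⟨y, Or.inl rfl, fun h => hyw (h w)⟩
    have hract : IsRightAct S (qact x) := by
      intro c s t'
      induction c using Quotient.ind with
      | _ p =>
        show qmk x (p * (s * t')) = qmk x ((p * s) * t')
        rw [mul_assoc]
    have hhom : IsActHom (fun (a : S) (s : S) => a * s) (qact x) (qmk x) := fun _ _ => rfl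
    have hinjB : Set.InjOn (qmk x) (pid y) := by
      intro p hp q hq hpq
      obtain ⟨n, m, hnm⟩ := Quotient.exact hpq
      have hfix : ∀ z ∈ pid y, x * z = z := by
        rintro z (rfl | ⟨u, rfl⟩)
        · exact hxy
        · rw [← mul_assoc, hxy]
      rw [xpow_fix (hfix p hp), xpow_fix (hfix q hq)] at hnm
      exact hnm
    have hinj := hlarge (QA x) (qact x) hract (qmk x) hhom hinjB
    have heq : qmk x t = qmk x (x * t) := Quotient.sound ⟨1, 0, rfl⟩
    exact hxt (hinj heq).symm
  · intro hcond B hB hnz C actC hC f hf hinj a a' hfa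
    obtain ⟨b, hbB, hbnz⟩ := hnz
    by_contra hne
    have key : ∀ a a' : S, f a = f a' → a ≠ a' → ∀ s : S, a' = a * s → False := by
      intro a a' hfa hne s hs
      rcases hchain (pid b) (pid a) (pid_prop b) (pid_prop a) with hsub | hsub
      · have hb : b ∈ pid a := hsub (Or.inl rfl)
        have hfb : f b = f (b * s) := by
          rcases hb with rfl | ⟨u, hu⟩
          · rw [hs] at hfa; exact hfa
          · subst hu
            calc f (a * u) = actC (f a) u := hf a u
              _ = actC (f a') u := by rw [hfa]
              _ = f (a' * u) := (hf a' u).symm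
              _ = f ((a * u) * s) := by
                  rw [hs, mul_assoc, mul_comm s u, ← mul_assoc]
        have hbeq : b = b * s := hinj hbB (hB.2 b hbB s) hfb
        rcases hcond s b (by rw [mul_comm]; exact hbeq.symm) with hid | hzero
        · exact hne (hs.trans (hid a).2).symm
        · exact hbnz (fun t => (hzero t).1)
      · have ha : a ∈ pid b := hsub (Or.inl rfl)
        have haB : a ∈ B := by
          rcases ha with rfl | ⟨u, hu⟩
          · exact hbB
          · exact hu ▸ hB.2 b hbB u
        have ha'B : a' ∈ B := hs ▸ hB.2 a haB s
        exact hne (hinj haB ha'B hfa)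
    rcases hchain (pid a) (pid a') (pid_prop a) (pid_prop a') with h | h
    · rcases h (Or.inl rfl) with heq | ⟨s, hs⟩
      · exact hne heq
      · exact key a' a hfa.symm (Ne.symm hne) s hs
    · rcases h (Or.inl rfl) with heq | ⟨s, hs⟩
      · exact hne heq.symm
      · exact key a a' hfa hne s hs
end

section
/- For a semigroup S, if the monoid S¹ (S with identity adjoined if necessary) is right uniform, then S is right uniform. -/
universe u

theorem stmt3 {S : Type u} [Semigroup S] (h : RightUniform (WithOne S)) :
    RightUniform S := by
  intro B hB hnz C actC hC f hf hinj
  -- view B inside WithOne S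
  set B' : Set (WithOne S) := (fun b : S => (b : WithOne S)) '' B with hB'
  have hsub : IsSubact (fun (a s : WithOne S) => a * s) B' := by
    constructor
    · obtain ⟨b, hb⟩ := hB.1
      exact ⟨b, ⟨b, hb, rfl⟩⟩
    · rintro b' ⟨b, hb, rfl⟩ s
      induction s using WithOne.recOneCoe with
      | one => exact ⟨b, hb, (mul_one _).symm⟩
      | coe s => exact ⟨b * s, hB.2 b hb s, (WithOne.coe_mul b s).symm⟩
  have hnz' : ∃ b' ∈ B', ¬ IsZeroElem (fun (a s : WithOne S) => a * s) b' := by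
    obtain ⟨b, hb, hbz⟩ := hnz
    refine ⟨b, ⟨b, hb, rfl⟩, fun hz => hbz fun s => ?_⟩
    have := hz (s : WithOne S)
    beta_reduce at this ⊢
    rw [← WithOne.coe_mul] at this
    exact WithOne.coe_inj.mp this
  -- extended act on Option C
  let actD : Option C → WithOne S → Option C := fun d x =>
    WithOne.recOneCoe d (fun s => some (d.casesOn (f s) (fun c => actC c s))) x
  have hD1 : ∀ d, actD d 1 = d := fun d => rfl
  have hDnone : ∀ s : S, actD none (s : WithOne S) = some (f s) := fun s => rfl
  have hDsome : ∀ (c : C) (s : S), actD (some c) (s : WithOne S) = some (actC c s) :=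
    fun c s => rfl
  have hDact : IsRightAct (WithOne S) actD := by
    intro d x y
    induction y using WithOne.recOneCoe with
    | one => rw [mul_one, hD1]
    | coe t =>
      induction x using WithOne.recOneCoe with
      | one => rw [one_mul, hD1]
      | coe s =>
        rw [← WithOne.coe_mul]
        cases d with
        | none => rw [hDnone, hDnone, hDsome, hf]
        | some c => rw [hDsome, hDsome, hDsome, hC]
  -- extended map
  let g : WithOne S → Option C := fun x => WithOne.recOneCoe none (fun s => some (f s)) x
  have hg1 : g 1 = none := rfl
  have hgc : ∀ s : S, g (s : WithOne S) = some (f s) := fun s => rfl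
  have hghom : IsActHom (fun (a s : WithOne S) => a * s) actD g := by
    intro a x
    beta_reduce
    induction x using WithOne.recOneCoe with
    | one => rw [mul_one, hD1]
    | coe s =>
      induction a using WithOne.recOneCoe with
      | one => rw [one_mul, hgc, hg1, hDnone]
      | coe a => rw [← WithOne.coe_mul, hgc, hgc, hDsome, hf]
  have hginj : Set.InjOn g B' := by
    rintro x ⟨b, hb, rfl⟩ y ⟨b', hb', rfl⟩ hxy
    rw [hgc, hgc] at hxy
    exact congrArg _ (hinj hb hb' (Option.some_injective _ hxy))
  have hinjg : Function.Injective g := h B' hsub hnz' (Option C) actD hDact g hghom hginj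
  intro a a' haa
  have : g (a : WithOne S) = g (a' : WithOne S) := by
    rw [hgc, hgc, haa]
  exact WithOne.coe_inj.mp (hinjg this)
end

section
/- For a semigroup S with no zero element, if S⁰ (S with a zero adjoined) is right uniform, then S is right uniform. -/
universe u

theorem stmt4 {S : Type u} [Semigroup S]
    (hz : ¬ ∃ z : S, ∀ s : S, z * s = z ∧ s * z = z)
    (h : RightUniform (WithZero S)) : RightUniform S := by
  intro B hB hnz C actC hact f hf hinj
  obtain ⟨b, hbB, -⟩ := hnz
  -- lift everything to WithZero
  set B' : Set (WithZero S) := {x | x = 0 ∨ ∃ s ∈ B, x = (s : WithZero S)} with hB'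
  set act' : Option C → WithZero S → Option C :=
    fun c s => c.bind fun c0 =>
      WithZero.recZeroCoe none (fun s0 => some (actC c0 s0)) s with hact'
  set f' : WithZero S → Option C :=
    WithZero.recZeroCoe none (fun s => some (f s)) with hf'
  have hact'none : ∀ s, act' none s = none := fun s => rfl
  have hact'zero : ∀ c, act' c 0 = none := by
    intro c; cases c <;> rfl
  have hact'coe : ∀ c0 (s : S), act' (some c0) (s : WithZero S) = some (actC c0 s) :=
    fun c0 s => rfl
  have hf'zero : f' 0 = none := rfl
  have hf'coe : ∀ s : S, f' (s : WithZero S) = some (f s) := fun s => rfl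
  have hact'' : IsRightAct (WithZero S) act' := by
    intro a s t
    cases a with
    | none => simp [hact'none]
    | some a =>
      induction s using WithZero.recZeroCoe with
      | zero => simp [hact'zero, hact'none]
      | coe s =>
        induction t using WithZero.recZeroCoe with
        | zero => simp [hact'zero]
        | coe t =>
          rw [← WithZero.coe_mul, hact'coe, hact'coe, hact'coe]
          exact congrArg some (hact a s t)
  have key : Function.Injective f' := by
    refine h B' ?_ ?_ (Option C) act' hact'' f' ?_ ?_
    · constructor
      · exact ⟨0, Or.inl rfl⟩
      · rintro x (rfl | ⟨s, hs, rfl⟩) t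
        · left; simp
        · induction t using WithZero.recZeroCoe with
          | zero => left; simp
          | coe t => right; exact ⟨s * t, hB.2 s hs t, by simp [WithZero.coe_mul]⟩
    · refine ⟨(b : WithZero S), Or.inr ⟨b, hbB, rfl⟩, fun hzb => ?_⟩
      have := hzb 0
      simp at this
    · intro a s
      induction a using WithZero.recZeroCoe with
      | zero =>
        induction s using WithZero.recZeroCoe with
        | zero => simp [hf'zero, hact'zero]
        | coe s => simp [hf'zero, hact'none]
      | coe a =>
        induction s using WithZero.recZeroCoe with
        | zero => simp [hf'zero, hf'coe, hact'zero]
        | coe s =>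
          show f' (↑a * ↑s) = act' (f' ↑a) ↑s
          rw [← WithZero.coe_mul, hf'coe, hf'coe, hact'coe]
          exact congrArg some (hf a s)
    · rintro x (rfl | ⟨s, hs, rfl⟩) y (rfl | ⟨t, ht, rfl⟩) hxy
      · rfl
      · rw [hf'zero, hf'coe] at hxy; exact absurd hxy (by simp)
      · rw [hf'zero, hf'coe] at hxy; exact absurd hxy.symm (by simp)
      · rw [hf'coe, hf'coe] at hxy
        exact congrArg _ (hinj hs ht (Option.some_injective C hxy))
  intro x y hxy
  have : f' (x : WithZero S) = f' (y : WithZero S) := by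
    rw [hf'coe, hf'coe, hxy]
  exact WithZero.coe_inj.mp (key this)
end

section
/- If S is a right zero semigroup with two elements, then S is right uniform but S¹ is not right uniform. -/
universe u

theorem stmt6 {S : Type u} [Semigroup S] (hrz : ∀ x y : S, x * y = y)
    (hcard : Nat.card S = 2) :
    RightUniform S ∧ ¬ RightUniform (WithOne S) := by
  obtain ⟨a, b, hab, -⟩ := Nat.card_eq_two_iff.mp hcard
  constructor
  · intro B hB _ C actC _ f _ hinj
    obtain ⟨⟨b0, hb0⟩, hcl⟩ := hB
    have hBuniv : B = Set.univ := Set.eq_univ_of_forall fun s => by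
      have : b0 * s ∈ B := hcl b0 hb0 s
      rwa [hrz] at this
    rw [hBuniv] at hinj
    exact Set.injOn_univ.mp hinj
  · intro h
    set B : Set (WithOne S) := Set.range (fun s : S => (s : WithOne S)) with hBdef
    have hsub : IsSubact (fun (x : WithOne S) (s : WithOne S) => x * s) B := by
      constructor
      · exact ⟨a, ⟨a, rfl⟩⟩
      · rintro x ⟨x', rfl⟩ s
        induction s using WithOne.recOneCoe with
        | one => exact ⟨x', by simp⟩
        | coe s' => exact ⟨s', by simp [← WithOne.coe_mul, hrz]⟩
    have hnz : ∃ x ∈ B, ¬ IsZeroElem (fun (x : WithOne S) (s : WithOne S) => x * s) x := by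
      refine ⟨(a : WithOne S), ⟨a, rfl⟩, fun hz => ?_⟩
      have : (a : WithOne S) * (b : WithOne S) = (a : WithOne S) := hz b
      rw [← WithOne.coe_mul, hrz, WithOne.coe_inj] at this
      exact hab this.symm
    -- the act C = S with action
    set actC : S → WithOne S → S := fun c s => WithOne.recOneCoe c id s with hactC
    have hract : IsRightAct (WithOne S) actC := by
      intro c s t
      induction t using WithOne.recOneCoe with
      | one => simp [hactC]
      | coe t' =>
        induction s using WithOne.recOneCoe with
        | one => simp [hactC]
        | coe s' => simp [hactC, ← WithOne.coe_mul, hrz]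
    set f : WithOne S → S := WithOne.recOneCoe a id with hf
    have hhom : IsActHom (fun (x : WithOne S) (s : WithOne S) => x * s) actC f := by
      intro x s
      induction s using WithOne.recOneCoe with
      | one => simp [hactC, hf]
      | coe s' =>
        induction x using WithOne.recOneCoe with
        | one => simp [hactC, hf]
        | coe x' => simp [hactC, hf, ← WithOne.coe_mul, hrz]
    have hinjB : Set.InjOn f B := by
      rintro x ⟨x', rfl⟩ y ⟨y', rfl⟩ hxy
      simp only [hf, WithOne.recOneCoe_coe, id] at hxy
      exact congrArg _ hxy
    have hinj := h B hsub hnz S actC hract f hhom hinjB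
    have : f (1 : WithOne S) = f (a : WithOne S) := by simp [hf]
    have := hinj this
    exact WithOne.one_ne_coe this
end

section
/- Let S be a semigroup without identity element. Then S¹ is right uniform if and only if S is right uniform and S has no left identity element. -/
universe u

section Aux
set_option linter.unusedSectionVars false

variable {S : Type u} [Semigroup S]

lemma withOne_cases (x : WithOne S) : x = 1 ∨ ∃ s : S, x = ↑s :=
  WithOne.recOneCoe (Or.inl rfl) (fun s => Or.inr ⟨s, rfl⟩) x

/-- Extension of an `S`-act `C` to a `WithOne S`-act on `Option C`,
where the extra point `none` acts like the image of `1` under `f`. -/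
def extAct {C : Type u} (actC : C → S → C) (f : S → C) : Option C → WithOne S → Option C :=
  fun c => WithOne.recOneCoe c (fun s => c.elim (some (f s)) (fun c' => some (actC c' s)))

@[simp] lemma extAct_one {C : Type u} (actC : C → S → C) (f : S → C) (c : Option C) :
    extAct actC f c 1 = c := by
  simp [extAct]

@[simp] lemma extAct_none_coe {C : Type u} (actC : C → S → C) (f : S → C) (s : S) :
    extAct actC f none (↑s) = some (f s) := by
  simp [extAct]

@[simp] lemma extAct_some_coe {C : Type u} (actC : C → S → C) (f : S → C) (c : C) (s : S) :
    extAct actC f (some c) (↑s) = some (actC c s) := by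
  simp [extAct]

/-- The extension of `f : S → C` to `WithOne S → Option C`. -/
def extFun {C : Type u} (f : S → C) : WithOne S → Option C :=
  WithOne.recOneCoe none (fun s => some (f s))

@[simp] lemma extFun_one {C : Type u} (f : S → C) : extFun f (1 : WithOne S) = none := by
  simp [extFun]

@[simp] lemma extFun_coe {C : Type u} (f : S → C) (s : S) : extFun f (↑s) = some (f s) := by
  simp [extFun]

end Aux

theorem stmt7 {S : Type u} [Semigroup S]
    (hid : ¬ ∃ e : S, ∀ s : S, e * s = s ∧ s * e = s) :
    RightUniform (WithOne S) ↔
      (RightUniform S ∧ ¬ ∃ e : S, ∀ s : S, e * s = s) := by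
  constructor
  · intro h
    constructor
    · -- S is right uniform
      intro B hB hnz C actC hC f hf hinj
      -- transport everything to `WithOne S`
      set B' : Set (WithOne S) := (fun s : S => (↑s : WithOne S)) '' B with hB'def
      have hsub : IsSubact (fun (a s : WithOne S) => a * s) B' := by
        constructor
        · obtain ⟨b, hb⟩ := hB.1
          exact ⟨↑b, ⟨b, hb, rfl⟩⟩
        · rintro b' ⟨b, hb, rfl⟩ x
          rcases withOne_cases x with rfl | ⟨s, rfl⟩
          · simpa using ⟨b, hb, rfl⟩
          · exact ⟨b * s, hB.2 b hb s, (WithOne.coe_mul b s).symm⟩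
      have hnz' : ∃ b ∈ B', ¬ IsZeroElem (fun (a s : WithOne S) => a * s) b := by
        obtain ⟨b, hb, hbnz⟩ := hnz
        refine ⟨↑b, ⟨b, hb, rfl⟩, fun hz => hbnz fun s => ?_⟩
        have h1 : (↑b * ↑s : WithOne S) = ↑b := hz ↑s
        rw [← WithOne.coe_mul] at h1
        exact WithOne.coe_inj.mp h1
      have hlarge := h B' hsub hnz' (Option C) (extAct actC f) ?_ (extFun f) ?_ ?_
      · intro a b hab
        have h2 : extFun f ↑a = extFun f ↑b := by
          simp only [extFun_coe, hab]
        exact WithOne.coe_inj.mp (hlarge h2)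
      · -- extAct is a right act
        intro c x y
        rcases withOne_cases x with rfl | ⟨s, rfl⟩
        · show extAct actC f c (1 * y) = extAct actC f (extAct actC f c 1) y
          rw [one_mul, extAct_one]
        · rcases withOne_cases y with rfl | ⟨t, rfl⟩
          · show extAct actC f c (↑s * 1) = extAct actC f (extAct actC f c ↑s) 1
            rw [mul_one, extAct_one]
          · show extAct actC f c (↑s * ↑t) = extAct actC f (extAct actC f c ↑s) ↑t
            rw [← WithOne.coe_mul]
            cases c with
            | none =>
              rw [extAct_none_coe, extAct_none_coe, extAct_some_coe]
              exact congrArg some (hf s t)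
            | some c' =>
              rw [extAct_some_coe, extAct_some_coe, extAct_some_coe]
              exact congrArg some (hC c' s t)
      · -- extFun is a hom
        intro a x
        rcases withOne_cases a with rfl | ⟨s, rfl⟩
        · rcases withOne_cases x with rfl | ⟨t, rfl⟩
          · show extFun f (1 * 1 : WithOne S) = extAct actC f (extFun f 1) 1
            rw [one_mul, extAct_one]
          · show extFun f ((1 : WithOne S) * ↑t) = extAct actC f (extFun f 1) ↑t
            rw [one_mul, extFun_one, extFun_coe, extAct_none_coe]
        · rcases withOne_cases x with rfl | ⟨t, rfl⟩
          · show extFun f (↑s * 1) = extAct actC f (extFun f ↑s) 1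
            rw [mul_one, extAct_one]
          · show extFun f (↑s * ↑t) = extAct actC f (extFun f ↑s) ↑t
            rw [← WithOne.coe_mul, extFun_coe, extFun_coe, extAct_some_coe]
            exact congrArg some (hf s t)
      · -- extFun is injective on B'
        rintro x ⟨a, ha, rfl⟩ y ⟨b, hb, rfl⟩ hxy
        simp only [extFun_coe, Option.some.injEq] at hxy
        exact congrArg _ (hinj ha hb hxy)
    · -- no left identity
      rintro ⟨e, he⟩
      set B : Set (WithOne S) := {x | ∃ s : S, x = ↑s} with hBdef
      have hsub : IsSubact (fun (a s : WithOne S) => a * s) B := by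
        refine ⟨⟨↑e, e, rfl⟩, ?_⟩
        rintro b ⟨s, rfl⟩ x
        rcases withOne_cases x with rfl | ⟨t, rfl⟩
        · exact ⟨s, (mul_one _).symm⟩
        · exact ⟨s * t, (WithOne.coe_mul s t).symm⟩
      have hnz : ∃ b ∈ B, ¬ IsZeroElem (fun (a s : WithOne S) => a * s) b := by
        refine ⟨↑e, ⟨e, rfl⟩, fun hz => ?_⟩
        -- then e * s = e for all s, so s = e for all s, so S = {e} and e is an identity
        have hall : ∀ s : S, s = e := by
          intro s
          have h1 : (↑e * ↑s : WithOne S) = ↑e := hz ↑s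
          rw [← WithOne.coe_mul, he s] at h1
          exact WithOne.coe_inj.mp h1
        exact hid ⟨e, fun s => ⟨he s, by rw [hall s, he e]⟩⟩
      have hlarge := h B hsub hnz (WithOne S) (fun a s => a * s)
        (fun a s t => (mul_assoc a s t).symm) (fun x => ↑e * x)
        (fun a s => (mul_assoc (↑e) a s).symm) ?_
      · have h1 : (↑e : WithOne S) * ↑e = ↑e * 1 := by
          rw [mul_one, ← WithOne.coe_mul, he e]
        have := hlarge h1
        exact WithOne.coe_ne_one this
      · rintro x ⟨s, rfl⟩ y ⟨t, rfl⟩ hxy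
        have hxy' : (↑e * ↑s : WithOne S) = ↑e * ↑t := hxy
        rwa [← WithOne.coe_mul, ← WithOne.coe_mul, he s, he t] at hxy'
  · rintro ⟨hu, hno⟩
    intro B hB hnz C actC hC f hf hinj
    by_cases h1 : (1 : WithOne S) ∈ B
    · -- then B = everything
      have hall : ∀ x : WithOne S, x ∈ B := by
        intro x
        have h2 : (1 : WithOne S) * x ∈ B := hB.2 1 h1 x
        rwa [one_mul] at h2
      intro a b hab
      exact hinj (hall a) (hall b) hab
    · -- B ⊆ S
      set B₀ : Set S := {s | (↑s : WithOne S) ∈ B} with hB₀def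
      have hmem : ∀ x ∈ B, ∃ s ∈ B₀, x = ↑s := by
        intro x hx
        rcases withOne_cases x with rfl | ⟨s, rfl⟩
        · exact absurd hx h1
        · exact ⟨s, hx, rfl⟩
      have hsub : IsSubact (fun (a s : S) => a * s) B₀ := by
        constructor
        · obtain ⟨b, hb⟩ := hB.1
          obtain ⟨s, hs, rfl⟩ := hmem b hb
          exact ⟨s, hs⟩
        · intro b hb s
          have h2 : (↑b * ↑s : WithOne S) ∈ B := hB.2 ↑b hb ↑s
          rw [← WithOne.coe_mul] at h2
          exact h2
      have hnz₀ : ∃ b ∈ B₀, ¬ IsZeroElem (fun (a s : S) => a * s) b := by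
        obtain ⟨b, hb, hbnz⟩ := hnz
        obtain ⟨s, hs, rfl⟩ := hmem b hb
        refine ⟨s, hs, fun hz => hbnz fun x => ?_⟩
        rcases withOne_cases x with rfl | ⟨t, rfl⟩
        · exact mul_one _
        · show (↑s * ↑t : WithOne S) = ↑s
          rw [← WithOne.coe_mul]
          exact congrArg _ (hz t)
      have hinj₀ : Function.Injective (fun s : S => f ↑s) := by
        apply hu B₀ hsub hnz₀ C (fun c s => actC c ↑s)
        · intro c s t
          have h2 : actC c (↑s * ↑t) = actC (actC c ↑s) ↑t := hC c ↑s ↑t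
          rw [← WithOne.coe_mul] at h2
          exact h2
        · intro a s
          exact hf ↑a ↑s
        · intro a ha b hb hab
          exact WithOne.coe_inj.mp (hinj ha hb hab)
      -- f cannot identify 1 with an element of S, else S has a left identity
      have hone : ∀ s : S, f 1 ≠ f ↑s := by
        intro s hs
        apply hno
        refine ⟨s, fun t => ?_⟩
        have h3 : f ↑(s * t) = f ↑t := by
          have e1 : f (↑s * ↑t) = actC (f ↑s) ↑t := hf ↑s ↑t
          have e2 : f ((1 : WithOne S) * ↑t) = actC (f 1) ↑t := hf 1 ↑t
          rw [one_mul] at e2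
          rw [WithOne.coe_mul, e1, ← hs, ← e2]
        exact (hinj₀ h3)
      intro a b hab
      rcases withOne_cases a with rfl | ⟨s, rfl⟩ <;>
        rcases withOne_cases b with rfl | ⟨t, rfl⟩
      · rfl
      · exact absurd hab (hone t)
      · exact absurd hab.symm (hone s)
      · exact congrArg _ (hinj₀ hab)
end

section
/- Let S be a semigroup without a zero element. Then S⁰ is right uniform if and only if S is right uniform and S has no left zero element. -/
universe u

set_option linter.unusedSectionVars false

section Aux

variable {S : Type u} [Semigroup S]

private lemma wz_cases (x : WithZero S) : x = 0 ∨ ∃ a : S, x = ↑a := by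
  induction x using WithZero.recZeroCoe with
  | zero => exact Or.inl rfl
  | coe a => exact Or.inr ⟨a, rfl⟩

private def toOpt : WithZero S → Option S := fun x => x

/-- Lift an `S`-act on `C` to a `WithZero S`-act on `Option C`. -/
private def liftAct {C : Type u} (actC : C → S → C) : Option C → WithZero S → Option C :=
  fun oc s => oc.bind fun c => (toOpt s).map fun t => actC c t

private lemma liftAct_none {C : Type u} (actC : C → S → C) (s : WithZero S) :
    liftAct actC none s = none := rfl

private lemma liftAct_zero {C : Type u} (actC : C → S → C) (oc : Option C) :
    liftAct actC oc 0 = none := by cases oc <;> rfl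

private lemma liftAct_coe {C : Type u} (actC : C → S → C) (c : C) (t : S) :
    liftAct actC (some c) ↑t = some (actC c t) := rfl

private lemma liftAct_isRightAct {C : Type u} (actC : C → S → C)
    (hC : IsRightAct S actC) : IsRightAct (WithZero S) (liftAct actC) := by
  intro oc s t
  rcases oc with _ | c
  · rw [liftAct_none, liftAct_none, liftAct_none]
  rcases wz_cases s with rfl | ⟨a, rfl⟩
  · rw [zero_mul, liftAct_zero, liftAct_none]
  rcases wz_cases t with rfl | ⟨b, rfl⟩
  · rw [mul_zero, liftAct_zero, liftAct_coe, liftAct_zero]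
  · rw [← WithZero.coe_mul, liftAct_coe, liftAct_coe, liftAct_coe, hC]

private def liftMap {C : Type u} (f : S → C) : WithZero S → Option C :=
  fun x => (toOpt x).map f

private lemma liftMap_zero {C : Type u} (f : S → C) : liftMap f (0 : WithZero S) = none := rfl

private lemma liftMap_coe {C : Type u} (f : S → C) (a : S) :
    liftMap f (↑a : WithZero S) = some (f a) := rfl

private lemma liftMap_isActHom {C : Type u} (actC : C → S → C) (f : S → C)
    (hf : IsActHom (fun (a : S) (s : S) => a * s) actC f) :
    IsActHom (fun (a : WithZero S) (s : WithZero S) => a * s) (liftAct actC) (liftMap f) := by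
  intro x s
  show liftMap f (x * s) = liftAct actC (liftMap f x) s
  rcases wz_cases x with rfl | ⟨a, rfl⟩
  · rw [zero_mul, liftMap_zero, liftAct_none]
  rcases wz_cases s with rfl | ⟨t, rfl⟩
  · rw [mul_zero, liftMap_zero, liftMap_coe, liftAct_zero]
  · rw [← WithZero.coe_mul, liftMap_coe, liftMap_coe, liftAct_coe, hf]

end Aux

theorem stmt8 {S : Type u} [Semigroup S]
    (hz : ¬ ∃ z : S, ∀ s : S, z * s = z ∧ s * z = z) :
    RightUniform (WithZero S) ↔
      (RightUniform S ∧ ¬ ∃ z : S, ∀ s : S, z * s = z) := by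
  constructor
  · intro hU
    constructor
    · -- S is right uniform
      intro B hB hBnz C actC hC f hf hinj
      obtain ⟨⟨b0, hb0⟩, hBcl⟩ := hB
      set B' : Set (WithZero S) := insert 0 ((fun a : S => (a : WithZero S)) '' B) with hB'def
      have hB'sub : IsSubact (fun (a : WithZero S) (s : WithZero S) => a * s) B' := by
        refine ⟨⟨0, Set.mem_insert _ _⟩, ?_⟩
        intro x hx s
        rcases Set.mem_insert_iff.mp hx with rfl | ⟨b, hb, rfl⟩
        · show (0 * s : WithZero S) ∈ B'
          rw [zero_mul]; exact Set.mem_insert _ _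
        rcases wz_cases s with rfl | ⟨t, rfl⟩
        · show ((b : WithZero S) * 0) ∈ B'
          rw [mul_zero]; exact Set.mem_insert _ _
        · show ((b : WithZero S) * ↑t) ∈ B'
          rw [← WithZero.coe_mul]
          exact Set.mem_insert_of_mem _ ⟨b * t, hBcl b hb t, rfl⟩
      have hB'nz : ∃ b ∈ B', ¬ IsZeroElem (fun (a : WithZero S) (s : WithZero S) => a * s) b := by
        refine ⟨↑b0, Set.mem_insert_of_mem _ ⟨b0, hb0, rfl⟩, fun h => ?_⟩
        have h0' : (↑b0 : WithZero S) * 0 = ↑b0 := h 0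
        rw [mul_zero] at h0'
        exact WithZero.coe_ne_zero h0'.symm
      have hinj' : Set.InjOn (liftMap f) B' := by
        intro x hx y hy hxy
        rcases Set.mem_insert_iff.mp hx with rfl | ⟨a, ha, rfl⟩ <;>
          rcases Set.mem_insert_iff.mp hy with rfl | ⟨b, hb, rfl⟩
        · rfl
        · rw [liftMap_zero, liftMap_coe] at hxy; exact absurd hxy (by simp)
        · rw [liftMap_zero, liftMap_coe] at hxy; exact absurd hxy (by simp)
        · rw [liftMap_coe, liftMap_coe] at hxy
          exact congrArg _ (hinj ha hb (Option.some_injective _ hxy))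
      have hL := hU B' hB'sub hB'nz (Option C) (liftAct actC)
        (liftAct_isRightAct actC hC) (liftMap f) (liftMap_isActHom actC f hf) hinj'
      intro x y hxy
      have : liftMap f (↑x : WithZero S) = liftMap f (↑y : WithZero S) := by
        rw [liftMap_coe, liftMap_coe, hxy]
      exact WithZero.coe_inj.mp (hL this)
    · -- S has no left zero
      rintro ⟨z, hzl⟩
      obtain ⟨s0, hs0⟩ : ∃ s : S, s * z ≠ z := by
        by_contra h
        push_neg at h
        exact hz ⟨z, fun s => ⟨hzl s, h s⟩⟩
      set B' : Set (WithZero S) := insert 0 {(z : WithZero S)} with hB'def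
      have hB'sub : IsSubact (fun (a : WithZero S) (s : WithZero S) => a * s) B' := by
        refine ⟨⟨0, Set.mem_insert _ _⟩, ?_⟩
        intro x hx s
        rcases Set.mem_insert_iff.mp hx with rfl | hx
        · show (0 * s : WithZero S) ∈ B'
          rw [zero_mul]; exact Set.mem_insert _ _
        rw [Set.mem_singleton_iff] at hx
        subst hx
        rcases wz_cases s with rfl | ⟨t, rfl⟩
        · show ((z : WithZero S) * 0) ∈ B'
          rw [mul_zero]; exact Set.mem_insert _ _
        · show ((z : WithZero S) * ↑t) ∈ B'
          rw [← WithZero.coe_mul, hzl t]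
          exact Set.mem_insert_of_mem _ rfl
      have hB'nz : ∃ b ∈ B', ¬ IsZeroElem (fun (a : WithZero S) (s : WithZero S) => a * s) b := by
        refine ⟨↑z, Set.mem_insert_of_mem _ rfl, fun h => ?_⟩
        have h0' : (↑z : WithZero S) * 0 = ↑z := h 0
        rw [mul_zero] at h0'
        exact WithZero.coe_ne_zero h0'.symm
      -- the collapsing homomorphism into `Option PUnit`
      have hactP : IsRightAct S (fun (c : PUnit.{u+1}) (_ : S) => c) := fun _ _ _ => rfl
      have hfP : IsActHom (fun (a : S) (s : S) => a * s)
          (fun (c : PUnit.{u+1}) (_ : S) => c) (fun _ => PUnit.unit) := fun _ _ => rfl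
      have hinj' : Set.InjOn (liftMap (fun _ : S => PUnit.unit.{u+1})) B' := by
        intro x hx y hy hxy
        rcases Set.mem_insert_iff.mp hx with rfl | hx <;>
          rcases Set.mem_insert_iff.mp hy with rfl | hy
        · rfl
        · rw [Set.mem_singleton_iff] at hy; subst hy
          rw [liftMap_zero, liftMap_coe] at hxy; exact absurd hxy (by simp)
        · rw [Set.mem_singleton_iff] at hx; subst hx
          rw [liftMap_zero, liftMap_coe] at hxy; exact absurd hxy.symm (by simp)
        · rw [Set.mem_singleton_iff] at hx hy; rw [hx, hy]
      have hL := hU B' hB'sub hB'nz (Option PUnit.{u+1}) (liftAct _)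
        (liftAct_isRightAct _ hactP) (liftMap _) (liftMap_isActHom _ _ hfP) hinj'
      have : ((s0 * z : S) : WithZero S) = (z : WithZero S) := by
        apply hL
        rw [liftMap_coe, liftMap_coe]
      exact hs0 (WithZero.coe_inj.mp this)
  · rintro ⟨hSU, hnz⟩
    intro B hB hBnz C actC hC f hf hinjB
    have hf' : ∀ (a s : WithZero S), f (a * s) = actC (f a) s := hf
    obtain ⟨b0, hb0B, hb0nz⟩ := hBnz
    obtain ⟨a0, rfl⟩ : ∃ a : S, b0 = ↑a := by
      rcases wz_cases b0 with rfl | h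
      · exact absurd (fun s => zero_mul s) hb0nz
      · exact h
    set B1 : Set S := {a : S | (a : WithZero S) ∈ B} with hB1def
    have hB1 : IsSubact (fun (a : S) (s : S) => a * s) B1 := by
      refine ⟨⟨a0, hb0B⟩, fun b hb s => ?_⟩
      show ((b * s : S) : WithZero S) ∈ B
      rw [WithZero.coe_mul]
      exact hB.2 _ hb ↑s
    have hB1nz : ∃ b ∈ B1, ¬ IsZeroElem (fun (a : S) (s : S) => a * s) b :=
      ⟨a0, hb0B, fun h => hnz ⟨a0, h⟩⟩
    have hg : Function.Injective (fun a : S => f ↑a) := by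
      refine hSU B1 hB1 hB1nz C (fun c s => actC c ↑s) (fun c s t => ?_)
        (fun a => f ↑a) (fun a s => ?_) (fun a ha b hb h => ?_)
      · show actC c ↑(s * t) = actC (actC c ↑s) ↑t
        rw [WithZero.coe_mul, hC]
      · show f ↑(a * s) = actC (f ↑a) ↑s
        rw [WithZero.coe_mul, hf']
      · exact WithZero.coe_inj.mp (hinjB ha hb h)
    have h0 : ∀ s : WithZero S, actC (f 0) s = f 0 := by
      intro s
      rw [← hf' 0 s, zero_mul]
    have hno : ∀ a : S, f ↑a ≠ f 0 := by
      intro a ha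
      apply hnz
      refine ⟨a, fun s => ?_⟩
      have : f ↑(a * s) = f ↑a := by
        rw [WithZero.coe_mul, hf', ha, h0]
      exact hg this
    intro x y hxy
    rcases wz_cases x with rfl | ⟨a, rfl⟩ <;> rcases wz_cases y with rfl | ⟨b, rfl⟩
    · rfl
    · exact absurd hxy.symm (hno b)
    · exact absurd hxy (hno a)
    · exact congrArg _ (hg hxy)
end

section
/- Every right uniform semigroup is an E-semigroup: the product of any two idempotents is an idempotent. -/
universe u

theorem stmt10 {S : Type u} [Semigroup S] (hu : RightUniform S) :
    ∀ e f : S, e * e = e → f * f = f → (e * f) * (e * f) = e * f := by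
  intro e f he hf
  by_cases hz : IsZeroElem (fun (a : S) (s : S) => a * s) e
  · -- e is a left zero: e*s = e for all s
    have hef : e * f = e := hz f
    rw [hef]
    exact hz e
  · -- e is not a left zero; use uniformity with B = eS
    set B : Set S := {x | ∃ s : S, x = e * s} with hB
    have hsub : IsSubact (fun (a : S) (s : S) => a * s) B := by
      constructor
      · exact ⟨e, e, he.symm⟩
      · rintro b ⟨s, rfl⟩ t
        exact ⟨s * t, mul_assoc e s t⟩
    have hnz : ∃ b ∈ B, ¬ IsZeroElem (fun (a : S) (s : S) => a * s) b :=
      ⟨e, ⟨e, he.symm⟩, hz⟩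
    have hlarge := hu B hsub hnz
    have hinj : Function.Injective (fun x : S => e * x) := by
      apply hlarge S (fun (a : S) (s : S) => a * s)
      · intro a s t; exact (mul_assoc a s t).symm
      · intro a s; exact (mul_assoc e a s).symm
      · rintro x ⟨s, rfl⟩ y ⟨t, rfl⟩ hxy
        simp only at hxy
        calc e * s = e * e * s := by rw [he]
          _ = e * (e * s) := mul_assoc e e s
          _ = e * (e * t) := hxy
          _ = e * e * t := (mul_assoc e e t).symm
          _ = e * t := by rw [he]
    -- e is a left identity
    have hid : ∀ x : S, e * x = x := by
      intro x
      apply hinj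
      show e * (e * x) = e * x
      rw [← mul_assoc, he]
    rw [hid f, hf]
end

section
/- In a right uniform semigroup with at most one left zero element, every nonzero idempotent is a left identity. -/
universe u

theorem stmt11 {S : Type u} [Semigroup S] (hu : RightUniform S)
    (hz : ∀ z₁ z₂ : S, (∀ s : S, z₁ * s = z₁) → (∀ s : S, z₂ * s = z₂) → z₁ = z₂)
    (e : S) (he : e * e = e) (hne : ¬ ∀ s : S, e * s = e ∧ s * e = e) :
    ∀ s : S, e * s = s := by
  -- B = eS, f = left mult by e
  set B : Set S := Set.range (fun s => e * s) with hB
  -- some element of B is not a left zero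
  have hnz : ∃ b ∈ B, ¬ IsZeroElem (fun (a : S) (s : S) => a * s) b := by
    by_contra h
    push_neg at h
    have hez : ∀ s : S, e * s = e := by
      have := h e ⟨e, he⟩
      simp only [not_not, IsZeroElem] at this
      exact this
    apply hne
    intro s
    refine ⟨hez s, ?_⟩
    have hlz : ∀ t : S, (s * e) * t = s * e := by
      intro t
      rw [mul_assoc, hez t]
    exact hz (s * e) e hlz hez
  have hsub : IsSubact (fun (a : S) (s : S) => a * s) B := by
    refine ⟨⟨e, e, he⟩, ?_⟩
    rintro b ⟨t, rfl⟩ s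
    exact ⟨t * s, (mul_assoc e t s).symm⟩
  have hlarge := hu B hsub hnz
  have hinj : Function.Injective (fun s => e * s) := by
    apply hlarge S (fun (a : S) (s : S) => a * s)
      (fun a s t => (mul_assoc a s t).symm) _
      (fun a s => (mul_assoc e a s).symm)
    rintro b ⟨t, rfl⟩ c ⟨u, rfl⟩ h
    simpa only [← mul_assoc, he] using h
  intro s
  have : e * (e * s) = e * s := by rw [← mul_assoc, he]
  exact hinj this
end

section
/- Let S be a left 0-simple semigroup. Then S is right uniform if and only if S is a 0-group (a group with a zero adjoined). -/
universe u

/-- Iterated left multiplication by `w`. -/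
private def itw {S : Type u} [Semigroup S] (w : S) : ℕ → S → S
  | 0, x => x
  | n + 1, x => w * itw w n x

private lemma itw_itw {S : Type u} [Semigroup S] (w : S) (m n : ℕ) (x : S) :
    itw w m (itw w n x) = itw w (m + n) x := by
  induction m with
  | zero => rw [Nat.zero_add]; rfl
  | succ k ih => rw [itw, ih, Nat.succ_add, itw]

private lemma itw_fix {S : Type u} [Semigroup S] (w : S) {x : S} (h : w * x = x) :
    ∀ n, itw w n x = x
  | 0 => rfl
  | n + 1 => by rw [itw, itw_fix w h n, h]

/-- The orbit relation of left multiplication by `w`. -/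
private def orbRel {S : Type u} [Semigroup S] (w : S) : S → S → Prop :=
  fun x y => y = w * x

private lemma eqvgen_itw {S : Type u} [Semigroup S] (w : S) {x y : S}
    (h : Relation.EqvGen (orbRel w) x y) : ∃ m n : ℕ, itw w m x = itw w n y := by
  induction h with
  | rel a b hab => exact ⟨1, 0, by rw [itw, itw, itw]; exact hab.symm⟩
  | refl a => exact ⟨0, 0, rfl⟩
  | symm a b _ ih => obtain ⟨m, n, h⟩ := ih; exact ⟨n, m, h.symm⟩
  | trans a b c _ _ ih1 ih2 =>
      obtain ⟨m, n, h1⟩ := ih1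
      obtain ⟨p, q, h2⟩ := ih2
      refine ⟨p + m, n + q, ?_⟩
      have e1 : itw w (p + m) a = itw w (p + n) b := by
        rw [← itw_itw, h1, itw_itw]
      have e2 : itw w (n + p) b = itw w (n + q) c := by
        rw [← itw_itw, h2, itw_itw]
      rw [e1, Nat.add_comm p n, e2]

/-- The quotient act by the orbit congruence of left multiplication by `w`. -/
private def orbAct {S : Type u} [Semigroup S] (w : S) (q : Quot (orbRel w)) (s : S) :
    Quot (orbRel w) :=
  Quot.lift (fun x => Quot.mk (orbRel w) (x * s))
    (fun x y (hxy : y = w * x) =>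
      Quot.sound (show y * s = w * (x * s) by rw [hxy, mul_assoc])) q

private lemma orbAct_isRightAct {S : Type u} [Semigroup S] (w : S) :
    IsRightAct S (orbAct w) := by
  intro q s t
  induction q using Quot.ind with
  | _ x => exact congrArg (Quot.mk (orbRel w)) (mul_assoc x s t).symm

private lemma orbMk_isActHom {S : Type u} [Semigroup S] (w : S) :
    IsActHom (fun (a : S) (s : S) => a * s) (orbAct w) (Quot.mk (orbRel w)) :=
  fun _ _ => rfl

theorem stmt13 {S : Type u} [Semigroup S] (z : S)
    (hzero : ∀ s : S, z * s = z ∧ s * z = z)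
    (hS2 : ∃ a b : S, a * b ≠ z)
    (hsimple : ∀ I : Set S, (I.Nonempty ∧ ∀ a ∈ I, ∀ s : S, s * a ∈ I) →
      I = {z} ∨ I = Set.univ) :
    RightUniform S ↔
      ((∀ a b : S, a ≠ z → b ≠ z → a * b ≠ z) ∧
       ∃ e : S, e ≠ z ∧ (∀ s : S, s ≠ z → e * s = s ∧ s * e = s) ∧
         ∀ s : S, s ≠ z → ∃ t : S, t ≠ z ∧ s * t = e ∧ t * s = e) := by
  have hzl : ∀ s : S, z * s = z := fun s => (hzero s).1
  have hzr : ∀ s : S, s * z = z := fun s => (hzero s).2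
  obtain ⟨a₀, b₀, hab⟩ := hS2
  have ha₀ : a₀ ≠ z := fun h => hab (by rw [h, hzl])
  -- the set of elements annihilated by everything on the left is {z}
  have hN : ({x : S | ∀ s : S, s * x = z} : Set S) = {z} := by
    rcases hsimple {x : S | ∀ s : S, s * x = z}
        ⟨⟨z, fun s => hzr s⟩,
          fun a ha t s => by
            show s * (t * a) = z
            rw [← mul_assoc]; exact ha (s * t)⟩ with h | h
    · exact h
    · exfalso
      have hb : b₀ ∈ ({x : S | ∀ s : S, s * x = z} : Set S) := by
        rw [h]; exact Set.mem_univ _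
      exact hab (hb a₀)
  -- left 0-simplicity: every nonzero element left-divides everything
  have hdiv : ∀ a : S, a ≠ z → ∀ b : S, ∃ s : S, s * a = b := by
    intro a ha b
    rcases hsimple {x : S | ∃ s : S, s * a = x}
        ⟨⟨z, z, hzl a⟩,
          fun x hx t => by
            obtain ⟨s, hs⟩ := hx
            exact ⟨t * s, by rw [mul_assoc, hs]⟩⟩ with h | h
    · exfalso
      apply ha
      have : a ∈ ({x : S | ∀ s : S, s * x = z} : Set S) := by
        intro s
        have hm : s * a ∈ ({z} : Set S) := by
          rw [← h]; exact ⟨s, rfl⟩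
        exact hm
      rw [hN] at this
      exact this
    · have hb : b ∈ {x : S | ∃ s : S, s * a = x} := by
        rw [h]; exact Set.mem_univ _
      exact hb
  -- no zero divisors
  have hnzd : ∀ a b : S, a ≠ z → b ≠ z → a * b ≠ z := by
    intro a b ha hb hab2
    have hall : ∀ y : S, y * b = z := by
      intro y
      obtain ⟨s, hs⟩ := hdiv a ha y
      rw [← hs, mul_assoc, hab2, hzr]
    obtain ⟨s, hs⟩ := hdiv b hb a
    exact ha (by rw [← hs]; exact hall s)
  constructor
  · -- right uniform ⇒ 0-group
    intro huni
    refine ⟨hnzd, ?_⟩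
    obtain ⟨w, hw⟩ := hdiv a₀ ha₀ a₀
    have hlarge := huni {x : S | w * x = x}
      ⟨⟨a₀, hw⟩, fun b hb s => show w * (b * s) = b * s by rw [← mul_assoc, hb]⟩
      ⟨a₀, hw, fun hz0 => ha₀ ((hz0 z).symm.trans (hzr a₀))⟩
    have hinjOn : Set.InjOn (Quot.mk (orbRel w)) {x : S | w * x = x} := by
      intro x hx y hy hxy
      obtain ⟨m, n, hmn⟩ := eqvgen_itw w (Quot.eq.mp hxy)
      rwa [itw_fix w hx m, itw_fix w hy n] at hmn
    have hinj := hlarge (Quot (orbRel w)) (orbAct w) (orbAct_isRightAct w)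
      (Quot.mk (orbRel w)) (orbMk_isActHom w) hinjOn
    -- w is a global left identity
    have hW : ∀ x : S, w * x = x := by
      intro x
      exact (hinj (@Quot.sound S (orbRel w) x (w * x) rfl)).symm
    have hwz : w ≠ z := fun h => ha₀ (by rw [← hW a₀, h, hzl])
    have hinvL : ∀ s : S, s ≠ z → ∃ t : S, t ≠ z ∧ t * s = w := by
      intro s hs
      obtain ⟨t, ht⟩ := hdiv s hs w
      refine ⟨t, fun h => hwz ?_, ht⟩
      rw [← ht, h, hzl]
    have hkey : ∀ s : S, s ≠ z → ∃ t : S, t ≠ z ∧ s * t = w ∧ t * s = w := by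
      intro s hs
      obtain ⟨t, htz, ht⟩ := hinvL s hs
      obtain ⟨u, huz, hu⟩ := hinvL t htz
      have hsu : u * w = s := by rw [← ht, ← mul_assoc, hu, hW]
      have hst : s * t = w := by rw [← hsu, mul_assoc, hW t, hu]
      exact ⟨t, htz, hst, ht⟩
    refine ⟨w, hwz, fun s hs => ⟨hW s, ?_⟩, hkey⟩
    obtain ⟨t, htz, hst, hts⟩ := hkey s hs
    calc s * w = s * (t * s) := by rw [hts]
      _ = s * t * s := (mul_assoc s t s).symm
      _ = w * s := by rw [hst]
      _ = s := hW s
  · -- 0-group ⇒ right uniform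
    rintro ⟨-, e, hez, hid, hinv⟩
    intro B hB hBnz C actC hactC f hf hinjOn
    obtain ⟨b, hbB, hbnz⟩ := hBnz
    have hbz : b ≠ z := by
      intro h
      exact hbnz (fun s => by show b * s = b; rw [h, hzl])
    obtain ⟨t, htz, hbt, -⟩ := hinv b hbz
    have hBuniv : ∀ x : S, x ∈ B := by
      intro x
      by_cases hx : x = z
      · have h : b * z ∈ B := hB.2 b hbB z
        have e : b * z = x := by rw [hzr, hx]
        rwa [e] at h
      · have h : b * (t * x) ∈ B := hB.2 b hbB (t * x)
        have e : b * (t * x) = x := by rw [← mul_assoc, hbt, (hid x hx).1]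
        rwa [e] at h
    intro p q hpq
    exact hinjOn (hBuniv p) (hBuniv q) hpq
end

section
/- Let S be a strongly right noetherian right uniform semigroup. Then S is left cancellative, or left nil, or left subelementary (S = L ⊔ C where L is a left ideal all of whose elements are left nilpotent and C is a nonempty subsemigroup of left cancellable elements). -/
universe u

/-- A right congruence on a semigroup. -/
def IsRightCongruence {S : Type u} [Semigroup S] (r : S → S → Prop) : Prop :=
  Equivalence r ∧ ∀ a b : S, r a b → ∀ s : S, r (a * s) (b * s)

/-- Ascending chain condition on right congruences. -/
def ACCRightCongruences (S : Type u) [Semigroup S] : Prop :=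
  ∀ f : ℕ → (S → S → Prop), (∀ n, IsRightCongruence (f n)) →
    (∀ n, ∀ a b : S, f n a b → f (n + 1) a b) →
    ∃ N : ℕ, ∀ n : ℕ, N ≤ n → f n = f N

/-- `spow c n` is the power `c ^ (n + 1)` in a semigroup. -/
def spow {S : Type u} [Semigroup S] (c : S) : ℕ → S
  | 0 => c
  | n + 1 => spow c n * c

/-- An element is left nilpotent if some power of it is a left zero. -/
def IsLeftNilpotent {S : Type u} [Semigroup S] (c : S) : Prop :=
  ∃ n : ℕ, ∀ s : S, spow c n * s = spow c n

/-- The right congruence annihilator of an element. -/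
def annRel {S : Type u} [Semigroup S] (c : S) : S → S → Prop :=
  fun s t => c * s = c * t

lemma spow_succ_left {S : Type u} [Semigroup S] (c : S) (n : ℕ) :
    c * spow c n = spow c (n + 1) := by
  induction n with
  | zero => rfl
  | succ n ih => show c * (spow c n * c) = spow c (n+1) * c; rw [← mul_assoc, ih]

lemma spow_add {S : Type u} [Semigroup S] (c : S) (m k : ℕ) :
    spow c m * spow c k = spow c (m + k + 1) := by
  induction k with
  | zero => rfl
  | succ k ih =>
      show spow c m * (spow c k * c) = _
      rw [← mul_assoc, ih]; rfl

lemma key_nilpotent {S : Type u} [Semigroup S] (hacc : ACCRightCongruences S)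
    (hu : RightUniform S) (c : S) (hnc : ¬ ∀ x y : S, c * x = c * y → x = y) :
    IsLeftNilpotent c := by
  push_neg at hnc
  obtain ⟨x, y, hxy, hne⟩ := hnc
  -- chain of annihilators
  have hcong : ∀ n, IsRightCongruence (annRel (spow c n)) := by
    intro n
    refine ⟨⟨fun a => rfl, fun h => h.symm, fun h1 h2 => h1.trans h2⟩, ?_⟩
    intro a b h s
    show spow c n * (a * s) = spow c n * (b * s)
    rw [← mul_assoc, ← mul_assoc, h]
  have hmono : ∀ n, ∀ a b : S, annRel (spow c n) a b → annRel (spow c (n+1)) a b := by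
    intro n a b h
    show spow c (n+1) * a = spow c (n+1) * b
    rw [← spow_succ_left, mul_assoc, mul_assoc, h]
  obtain ⟨N, hN⟩ := hacc (fun n => annRel (spow c n)) hcong hmono
  set a := spow c N with ha
  -- a * x = a * y
  have haxy : ∀ n, spow c n * x = spow c n * y := by
    intro n
    induction n with
    | zero => exact hxy
    | succ n ih =>
        show spow c n * c * x = spow c n * c * y
        rw [mul_assoc, mul_assoc, hxy]
  -- ann(a*a) ⊆ ann(a)
  have haa : a * a = spow c (N + N + 1) := spow_add c N N
  have hstab : ∀ u v : S, (a * a) * u = (a * a) * v → a * u = a * v := by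
    intro u v h
    rw [haa] at h
    have := hN (N + N + 1) (by omega)
    have h2 : annRel (spow c (N+N+1)) u v := h
    rw [this] at h2
    exact h2
  set B : Set S := Set.range (fun s => a * s) with hB
  have hsub : IsSubact (fun (p : S) (q : S) => p * q) B := by
    constructor
    · exact ⟨a * a, a, rfl⟩
    · rintro b ⟨s, rfl⟩ t
      exact ⟨s * t, (mul_assoc a s t).symm⟩
  by_cases hz : ∃ b ∈ B, ¬ IsZeroElem (fun (p : S) (q : S) => p * q) b
  · exfalso
    have hlarge := hu B hsub hz
    have hinj := hlarge S (fun p q => p * q) (fun p s t => (mul_assoc p s t).symm)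
      (fun s => a * s) (fun s t => (mul_assoc a s t).symm) ?_
    · exact hne (hinj (haxy N))
    · rintro b1 ⟨u, rfl⟩ b2 ⟨v, rfl⟩ h
      simp only at h
      apply hstab
      rw [mul_assoc, mul_assoc]
      exact h
  · push_neg at hz
    have := hz (a * a) ⟨a, rfl⟩
    exact ⟨N + N + 1, fun s => by rw [← haa]; exact this s⟩

theorem stmt14 {S : Type u} [Semigroup S] (hacc : ACCRightCongruences S)
    (hu : RightUniform S) :
    (∀ c x y : S, c * x = c * y → x = y) ∨
    (∀ s : S, IsLeftNilpotent s) ∨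
    (∃ L C : Set S, Disjoint L C ∧ L ∪ C = Set.univ ∧
      L.Nonempty ∧ (∀ a ∈ L, ∀ s : S, s * a ∈ L) ∧ (∀ a ∈ L, IsLeftNilpotent a) ∧
      C.Nonempty ∧ (∀ a ∈ C, ∀ b ∈ C, a * b ∈ C) ∧
      (∀ c ∈ C, ∀ x y : S, c * x = c * y → x = y)) := by
  by_cases hlc : ∀ c x y : S, c * x = c * y → x = y
  · exact Or.inl hlc
  · push_neg at hlc
    by_cases hC : ∃ c : S, ∀ x y : S, c * x = c * y → x = y
    · -- subelementary case
      refine Or.inr (Or.inr ?_)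
      refine ⟨{s | ¬ ∀ x y : S, s * x = s * y → x = y},
              {s | ∀ x y : S, s * x = s * y → x = y}, ?_, ?_, ?_, ?_, ?_, ?_, ?_, ?_⟩
      · rw [Set.disjoint_left]; intro s hs hs2; exact hs hs2
      · ext s; simp only [Set.mem_union, Set.mem_setOf_eq, Set.mem_univ, iff_true]
        exact (em _).symm
      · obtain ⟨c, x, y, h1, h2⟩ := hlc
        exact ⟨c, fun h => h2 (h x y h1)⟩
      · intro b hb s hs
        push_neg at hb
        obtain ⟨x, y', h1', h2'⟩ := hb
        exact h2' (hs x y' (by rw [mul_assoc, mul_assoc, h1']))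
      · intro b hb
        exact key_nilpotent hacc hu b hb
      · exact hC
      · intro p hp q hq x y h
        rw [mul_assoc, mul_assoc] at h
        exact hq x y (hp _ _ h)
      · intro c hc
        exact hc
    · push_neg at hC
      refine Or.inr (Or.inl ?_)
      intro s
      exact key_nilpotent hacc hu s (by push_neg; exact hC s)
end
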